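/- Let G = ⊕_{i=1}^∞ Gᵢ with quasi-ultrametric d_G generated by metrics d_{Gᵢ} (with scaling sequence sᵢ as above). Suppose there is a constant C ≥ 1 such that for every i and every s ∈ (1, diam(Gᵢ)] there is a cover {U₀,...,Uₙ} of (Gᵢ, d_{Gᵢ}) whose s-scale connected components are C·s-bounded. Then asdim_AN(G, d_G) ≤ n. -/

import Mathlib

/-- The support of an element of a product of groups. -/
def gsupp {G : ℕ → Type*} [∀ i, Group (G i)] (g : ∀ i, G i) : Set ℕ :=
  {i | g i ≠ 1}

/-- The restricted direct product (direct sum) of a sequence of groups. -/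
def RProd (G : ℕ → Type*) [∀ i, Group (G i)] : Subgroup (∀ i, G i) where
  carrier := {g | (gsupp g).Finite}
  one_mem' := by
    have : gsupp (1 : ∀ i, G i) = ∅ := by
      ext i; simp [gsupp]
    simp [this]
  mul_mem' := fun {a b} ha hb => by
    refine (ha.union hb).subset fun i hi => ?_
    by_contra h
    simp only [gsupp, Set.mem_union, Set.mem_setOf_eq, not_or, not_not] at h hi
    exact hi (by simp [Pi.mul_apply, h.1, h.2])
  inv_mem' := fun {a} ha => by
    refine ha.subset fun i hi => ?_
    simp only [gsupp, Set.mem_setOf_eq, Pi.inv_apply, ne_eq, inv_eq_one] at hi ⊢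
    exact hi

/-- `k(g) = max { i | πᵢ(g) ≠ 1 }` (equal to `0` for `g = 1`). -/
noncomputable def kval {G : ℕ → Type*} [∀ i, Group (G i)] (g : ∀ i, G i) : ℕ :=
  sSup (gsupp g)

/-- The norm `‖g‖_G = s_{k(g)} · ‖π_{k(g)}(g)‖_{G_{k(g)}}`. -/
noncomputable def normG {G : ℕ → Type*} [∀ i, Group (G i)]
    (s : ℕ → ℝ) (N : ∀ i, G i → ℝ) (g : ∀ i, G i) : ℝ :=
  s (kval g) * N (kval g) (g (kval g))

/-- A norm coming from a left invariant metric with `d(x,y) ≥ 1` for distinct `x,y`. -/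
def GroupNormOne {H : Type*} [Group H] (N : H → ℝ) : Prop :=
  (∀ g, N g = 0 ↔ g = 1) ∧ (∀ g, N g⁻¹ = N g) ∧ (∀ g h, N (g * h) ≤ N g + N h) ∧
    ∀ g, g ≠ 1 → 1 ≤ N g

/-- Diameter of a finite group with norm `N`. -/
noncomputable def gdiam {H : Type*} (N : H → ℝ) : ℝ := sSup (Set.range N)


def ScaleChain {X : Type*} (d : X → X → ℝ) (s : ℝ) (U : Set X) (x y : X) : Prop :=
  ∃ (m : ℕ) (c : ℕ → X), c 0 = x ∧ c m = y ∧ (∀ i ≤ m, c i ∈ U) ∧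
    ∀ i < m, d (c i) (c (i + 1)) < s

def IsControlFun {X : Type*} (d : X → X → ℝ) (n : ℕ) (D : ℝ → ℝ) : Prop :=
  ∀ s : ℝ, 0 < s → ∃ U : Fin (n + 1) → Set X,
    (∀ x, ∃ i, x ∈ U i) ∧ ∀ i x y, ScaleChain d s (U i) x y → d x y ≤ D s

def ANdimLE {X : Type*} (d : X → X → ℝ) (n : ℕ) : Prop :=
  ∃ C : ℝ, 0 < C ∧ ∃ b : ℝ, IsControlFun d n (fun s => C * s + b)

private lemma gnorm_one_eq {H : Type*} [Group H] {N : H → ℝ} (h : GroupNormOne N) :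
    N 1 = 0 := (h.1 1).mpr rfl

private lemma gnorm_nonneg {H : Type*} [Group H] {N : H → ℝ} (h : GroupNormOne N) (g : H) :
    0 ≤ N g := by
  by_cases hg : g = 1
  · rw [hg, gnorm_one_eq h]
  · linarith [h.2.2.2 g hg]

private lemma le_gdiam {H : Type*} [Fintype H] (N : H → ℝ) (g : H) : N g ≤ gdiam N :=
  le_csSup (Set.finite_range N).bddAbove ⟨g, rfl⟩

private lemma one_le_gdiam {H : Type*} [Group H] [Fintype H] [Nontrivial H] {N : H → ℝ}
    (h : GroupNormOne N) : 1 ≤ gdiam N := by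
  obtain ⟨g, hg⟩ := exists_ne (1 : H)
  exact le_trans (h.2.2.2 g hg) (le_gdiam N g)

private lemma gdiam_nonneg {H : Type*} [Group H] [Fintype H] {N : H → ℝ}
    (h : GroupNormOne N) : 0 ≤ gdiam N := by
  have := le_gdiam N 1
  rw [gnorm_one_eq h] at this
  exact this

private lemma kval_mem {G : ℕ → Type*} [∀ i, Group (G i)] {g : ∀ i, G i}
    (hfin : (gsupp g).Finite) (hg : g ≠ 1) : g (kval g) ≠ 1 := by
  have : kval g ∈ gsupp g := by
    apply Nat.sSup_mem _ hfin.bddAbove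
    rcases Function.ne_iff.mp hg with ⟨i, hi⟩
    exact ⟨i, hi⟩
  exact this

private lemma le_kval {G : ℕ → Type*} [∀ i, Group (G i)] {g : ∀ i, G i}
    (hfin : (gsupp g).Finite) {j : ℕ} (hj : g j ≠ 1) : j ≤ kval g :=
  le_csSup hfin.bddAbove hj

private lemma kval_le {G : ℕ → Type*} [∀ i, Group (G i)] {g : ∀ i, G i} {i : ℕ}
    (h : ∀ j, i < j → g j = 1) : kval g ≤ i := by
  rcases Set.eq_empty_or_nonempty (gsupp g) with he | hne
  · simp [kval, he]
  · refine csSup_le hne fun j hj => ?_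
    by_contra hij
    exact hj (h j (not_le.mp hij))

private lemma normG_one {G : ℕ → Type*} [∀ i, Group (G i)] (s : ℕ → ℝ) (N : ∀ i, G i → ℝ)
    (hN : ∀ i, GroupNormOne (N i)) : normG s N 1 = 0 := by
  simp [normG, gnorm_one_eq (hN (kval (1 : ∀ i, G i)))]
/-- If there is a uniform constant `C ≥ 1` such that each factor `(Gᵢ, d_{Gᵢ})` has, for
every scale `t ∈ (1, diam Gᵢ]`, a cover by `n+1` sets whose `t`-scale connected components
are `C·t`-bounded, then the direct sum with the quasi-ultrametric has `asdim_AN ≤ n`. -/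
theorem asdimAN_le_of_uniform_covers (G : ℕ → Type*) [∀ i, Group (G i)]
    [∀ i, Fintype (G i)] [Subsingleton (G 0)] [∀ i, Nontrivial (G (i + 1))]
    (N : ∀ i, G i → ℝ) (hN : ∀ i, GroupNormOne (N i))
    (s : ℕ → ℝ) (hs1 : 1 ≤ s 1)
    (hs : ∀ i, s i * gdiam (N i) + 1 ≤ s (i + 1))
    (n : ℕ) (C : ℝ) (hC : 1 ≤ C)
    (hcov : ∀ (i : ℕ) (t : ℝ), 1 < t → t ≤ gdiam (N i) →
      ∃ U : Fin (n + 1) → Set (G i), (∀ x, ∃ j, x ∈ U j) ∧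
        ∀ j x y, ScaleChain (fun a b : G i => N i (a⁻¹ * b)) t (U j) x y →
          N i (x⁻¹ * y) ≤ C * t) :
    ANdimLE (fun g h : RProd G => normG s N (((g : ∀ i, G i))⁻¹ * (h : ∀ i, G i))) n := by
  classical
  -- basic facts about the scaling sequence and diameters
  have hd0 : ∀ i, 0 ≤ gdiam (N i) := fun i => gdiam_nonneg (hN i)
  have hd1 : ∀ i, 1 ≤ i → 1 ≤ gdiam (N i) := by
    rintro (_ | m) h
    · omega
    · exact one_le_gdiam (hN (m + 1))
  have hsge : ∀ i, 1 ≤ i → 1 ≤ s i := by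
    rintro (_ | m) h
    · omega
    · clear h
      induction m with
      | zero => exact hs1
      | succ j ih =>
        have h1 : 1 ≤ gdiam (N (j + 1)) := hd1 (j + 1) (by omega)
        have h2 := hs (j + 1)
        nlinarith
  have hstep : ∀ i, 1 ≤ i → s i + 1 ≤ s (i + 1) := by
    intro i hi
    have h1 : 1 ≤ gdiam (N i) := hd1 i hi
    have h2 := hs i
    have h3 := hsge i hi
    nlinarith
  have hsmono : ∀ i j, 1 ≤ i → i ≤ j → s i ≤ s j := by
    intro i j hi hij
    induction j with
    | zero => omega
    | succ m ih =>
      rcases Nat.lt_or_ge i (m + 1) with h | h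
      · have h1 := ih (by omega)
        have h2 := hstep m (by omega)
        linarith
      · have : i = m + 1 := le_antisymm hij h
        rw [this]
  have hsd : ∀ k i, 1 ≤ k → k < i → s k * gdiam (N k) + 1 ≤ s i := by
    intro k i hk hki
    induction i with
    | zero => omega
    | succ m ih =>
      rcases Nat.lt_or_ge k m with h | h
      · have h1 := ih h
        have h2 := hstep m (by omega)
        linarith
      · have : k = m := by omega
        subst this
        exact hs k
  have hsnat : ∀ j : ℕ, 1 ≤ j → (j : ℝ) ≤ s j := by
    rintro (_ | m) h
    · omega
    · clear h
      induction m with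
      | zero => simpa using hs1
      | succ j ih =>
        have := hstep (j + 1) (by omega)
        push_cast
        push_cast at ih
        linarith
  -- lower bound for the norm of a nontrivial element
  have key_low : ∀ u : ∀ i, G i, (gsupp u).Finite → u ≠ 1 →
      (1 ≤ kval u ∧ s (kval u) ≤ normG s N u) := by
    intro u hf hu
    have hk := kval_mem hf hu
    have hk1 : 1 ≤ kval u := by
      rcases Nat.eq_zero_or_pos (kval u) with h | h
      · exfalso; apply hk; rw [h]; exact Subsingleton.elim _ _
      · exact h
    refine ⟨hk1, ?_⟩
    have h1 : 1 ≤ N (kval u) (u (kval u)) := (hN (kval u)).2.2.2 _ hk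
    have h2 : 1 ≤ s (kval u) := hsge _ hk1
    unfold normG
    nlinarith
  -- elements are trivial above any index whose scale dominates the norm
  have agree : ∀ u : ∀ i, G i, (gsupp u).Finite → ∀ m, 1 ≤ m → normG s N u < s m →
      ∀ j, m ≤ j → u j = 1 := by
    intro u hf m hm hlt j hj
    by_contra h
    have hu1 : u ≠ 1 := fun he => h (by rw [he]; rfl)
    have hjk : j ≤ kval u := le_kval hf h
    obtain ⟨hk1, h1⟩ := key_low u hf hu1
    have := hsmono m (kval u) hm (le_trans hj hjk)
    linarith
  -- upper bound for the norm in terms of the top coordinate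
  have norm_ub : ∀ u : ∀ i, G i, (gsupp u).Finite → ∀ i, 1 ≤ i → kval u ≤ i →
      normG s N u ≤ s i * gdiam (N i) := by
    intro u hf i hi hk
    have hsi : 1 ≤ s i := hsge i hi
    have hdi : 1 ≤ gdiam (N i) := hd1 i hi
    by_cases hu : u = 1
    · rw [hu, normG_one s N hN]; nlinarith
    · obtain ⟨hk1, _⟩ := key_low u hf hu
      have hub : normG s N u ≤ s (kval u) * gdiam (N (kval u)) := by
        have h1 := le_gdiam (N (kval u)) (u (kval u))
        have h2 := hsge _ hk1
        have h3 := gnorm_nonneg (hN (kval u)) (u (kval u))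
        unfold normG
        nlinarith
      rcases lt_or_eq_of_le hk with h | h
      · have h1 := hsd (kval u) i hk1 h
        nlinarith
      · rw [h] at hub; exact hub
  -- sharper bound when the top coordinate is strictly below i
  have norm_lt : ∀ u : ∀ i, G i, (gsupp u).Finite → u ≠ 1 → ∀ i, kval u < i →
      normG s N u + 1 ≤ s i := by
    intro u hf hu i hki
    obtain ⟨hk1, _⟩ := key_low u hf hu
    have hub : normG s N u ≤ s (kval u) * gdiam (N (kval u)) := by
      have h1 := le_gdiam (N (kval u)) (u (kval u))
      have h2 := hsge _ hk1
      have h3 := gnorm_nonneg (hN (kval u)) (u (kval u))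
      unfold normG
      nlinarith
    have := hsd (kval u) i hk1 hki
    linarith
  -- coordinate-wise bound
  have coord : ∀ u : ∀ i, G i, (gsupp u).Finite → ∀ i, kval u ≤ i → ∀ r : ℝ, 0 < r →
      normG s N u < r → s i * N i (u i) < r := by
    intro u hf i hk r hr hlt
    by_cases h : u i = 1
    · rw [h, gnorm_one_eq (hN i), mul_zero]; exact hr
    · have hik : i ≤ kval u := le_kval hf h
      have hkeq : kval u = i := le_antisymm hk hik
      unfold normG at hlt
      rw [hkeq] at hlt
      exact hlt
  -- chains with small steps do not move above i
  have chain_agree : ∀ (r : ℝ) (i : ℕ), r ≤ s (i + 1) → ∀ (m : ℕ) (c : ℕ → RProd G),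
      (∀ l, l < m → normG s N (((c l : ∀ j', G j'))⁻¹ * (c (l + 1) : ∀ j', G j')) < r) →
      ∀ l, l ≤ m → ∀ j, i < j → (c l : ∀ j', G j') j = (c 0 : ∀ j', G j') j := by
    intro r i hri m c hc l
    induction l with
    | zero => intro _ j _; rfl
    | succ p ih =>
      intro hpm j hj
      have hp : p < m := by omega
      have hu : ((c p : ∀ j', G j'))⁻¹ * (c (p + 1) : ∀ j', G j') ∈ RProd G :=
        mul_mem (inv_mem (c p).2) (c (p + 1)).2
      have h2 := agree _ hu (i + 1) (by omega) (lt_of_lt_of_le (hc p hp) hri) j (by omega)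
      have heq : (c p : ∀ j', G j') j = (c (p + 1) : ∀ j', G j') j := by
        have h3 : ((c p : ∀ j', G j') j)⁻¹ * (c (p + 1) : ∀ j', G j') j = 1 := h2
        exact (inv_mul_eq_one.mp h3)
      rw [← heq]
      exact ih (by omega) j hj
  -- the control function
  refine ⟨C, lt_of_lt_of_le zero_lt_one hC, 0, ?_⟩
  intro r hr
  have hCr : r ≤ C * r := by nlinarith
  by_cases hr1 : s 1 < r
  · -- main case: find the critical index i
    set S : Set ℕ := {j | 1 ≤ j ∧ s j < r} with hS
    have hbdd : BddAbove S := by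
      refine ⟨⌈r⌉₊, fun j hj => ?_⟩
      obtain ⟨hj1, hjr⟩ := hj
      have h1 : (j : ℝ) ≤ s j := hsnat j hj1
      have h2 : (j : ℝ) ≤ (⌈r⌉₊ : ℝ) := le_trans (le_of_lt (lt_of_le_of_lt h1 hjr)) (Nat.le_ceil r)
      exact_mod_cast h2
    have hne : S.Nonempty := ⟨1, le_refl 1, hr1⟩
    set i := sSup S with hi
    have hiS : i ∈ S := Nat.sSup_mem hne hbdd
    obtain ⟨hi1, hsir⟩ := hiS
    have hnext : r ≤ s (i + 1) := by
      by_contra h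
      push_neg at h
      have : i + 1 ∈ S := ⟨by omega, h⟩
      have := le_csSup hbdd this
      omega
    have hsipos : (0 : ℝ) < s i := lt_of_lt_of_le zero_lt_one (hsge i hi1)
    by_cases hbig : r ≤ s i * gdiam (N i)
    · -- use the cover of G i at scale t = r / s i
      set t : ℝ := r / s i with ht
      have ht1 : 1 < t := (one_lt_div hsipos).mpr hsir
      have ht2 : t ≤ gdiam (N i) := (div_le_iff₀ hsipos).mpr (by nlinarith)
      obtain ⟨U', hU'cov, hU'⟩ := hcov i t ht1 ht2
      refine ⟨fun j => {g : RProd G | (g : ∀ i', G i') i ∈ U' j}, fun x => hU'cov _, ?_⟩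
      rintro j x y ⟨m, c, hc0, hcm, hcU, hcd⟩
      have hagree := chain_agree r i hnext m c hcd
      -- the difference of the endpoints
      have hum : ((x : ∀ i', G i'))⁻¹ * (y : ∀ i', G i') ∈ RProd G :=
        mul_mem (inv_mem x.2) y.2
      have hagxy : ∀ j', i < j' → (((x : ∀ i', G i'))⁻¹ * (y : ∀ i', G i')) j' = 1 := by
        intro j' hj'
        have h1 := hagree m le_rfl j' hj'
        rw [hc0, hcm] at h1
        show ((x : ∀ i', G i') j')⁻¹ * (y : ∀ i', G i') j' = 1
        rw [h1, inv_mul_cancel]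
      have hku : kval (((x : ∀ i', G i'))⁻¹ * (y : ∀ i', G i')) ≤ i := kval_le hagxy
      -- projected chain in G i
      have hxyi : N i (((x : ∀ i', G i') i)⁻¹ * (y : ∀ i', G i') i) ≤ C * t := by
        apply hU' j
        refine ⟨m, fun l => (c l : ∀ i', G i') i,
          congrArg (fun z : RProd G => (z : ∀ i', G i') i) hc0,
          congrArg (fun z : RProd G => (z : ∀ i', G i') i) hcm,
          fun l hl => hcU l hl, ?_⟩
        intro l hl
        have hustep : ((c l : ∀ j', G j'))⁻¹ * (c (l + 1) : ∀ j', G j') ∈ RProd G :=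
          mul_mem (inv_mem (c l).2) (c (l + 1)).2
        have hkus : kval (((c l : ∀ j', G j'))⁻¹ * (c (l + 1) : ∀ j', G j')) ≤ i := by
          apply kval_le
          intro j' hj'
          exact agree _ hustep (i + 1) (by omega)
            (lt_of_lt_of_le (hcd l hl) hnext) j' (by omega)
        have hcoord := coord _ hustep i hkus r hr (hcd l hl)
        have : N i ((((c l : ∀ j', G j'))⁻¹ * (c (l + 1) : ∀ j', G j')) i) < t := by
          rw [ht, lt_div_iff₀ hsipos]
          nlinarith
        exact this
      -- final bound
      show normG s N (((x : ∀ i', G i'))⁻¹ * (y : ∀ i', G i')) ≤ C * r + 0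
      rw [add_zero]
      set u := ((x : ∀ i', G i'))⁻¹ * (y : ∀ i', G i') with hu
      by_cases hui : u i = 1
      · by_cases hu1 : u = 1
        · rw [hu1, normG_one s N hN]; nlinarith
        · have hki : kval u < i := by
            rcases lt_or_eq_of_le hku with h | h
            · exact h
            · exfalso; exact kval_mem (hum : (gsupp u).Finite) hu1 (by rw [h]; exact hui)
          have := norm_lt u hum hu1 i hki
          linarith
      · have hik : i ≤ kval u := le_kval hum hui
        have hkeq : kval u = i := le_antisymm hku hik
        have hnv : normG s N u = s i * N i (u i) := by unfold normG; rw [hkeq]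
        have hNle : N i (u i) ≤ C * t := hxyi
        have hst : s i * t = r := by rw [ht]; field_simp [hsipos.ne']
        rw [hnv]
        calc s i * N i (u i) ≤ s i * (C * t) := by nlinarith
          _ = C * (s i * t) := by ring
          _ = C * r := by rw [hst]
    · -- trivial cover: everything within scale r of everything above coordinate i
      push_neg at hbig
      refine ⟨fun _ => Set.univ, fun x => ⟨0, trivial⟩, ?_⟩
      rintro j x y ⟨m, c, hc0, hcm, hcU, hcd⟩
      have hagree := chain_agree r i hnext m c hcd
      have hum : ((x : ∀ i', G i'))⁻¹ * (y : ∀ i', G i') ∈ RProd G :=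
        mul_mem (inv_mem x.2) y.2
      have hagxy : ∀ j', i < j' → (((x : ∀ i', G i'))⁻¹ * (y : ∀ i', G i')) j' = 1 := by
        intro j' hj'
        have h1 := hagree m le_rfl j' hj'
        rw [hc0, hcm] at h1
        show ((x : ∀ i', G i') j')⁻¹ * (y : ∀ i', G i') j' = 1
        rw [h1, inv_mul_cancel]
      have hku : kval (((x : ∀ i', G i'))⁻¹ * (y : ∀ i', G i')) ≤ i := kval_le hagxy
      have := norm_ub _ hum i hi1 hku
      show normG s N (((x : ∀ i', G i'))⁻¹ * (y : ∀ i', G i')) ≤ C * r + 0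
      linarith
  · -- small scales: every r-chain is constant
    push_neg at hr1
    refine ⟨fun _ => Set.univ, fun x => ⟨0, trivial⟩, ?_⟩
    rintro j x y ⟨m, c, hc0, hcm, hcU, hcd⟩
    have hnext : r ≤ s (0 + 1) := hr1
    have hagree := chain_agree r 0 hnext m c hcd
    have hxy : (y : ∀ i', G i') = (x : ∀ i', G i') := by
      funext j'
      rcases Nat.eq_zero_or_pos j' with h | h
      · subst h; exact Subsingleton.elim _ _
      · have h1 := hagree m le_rfl j' h
        rw [hc0, hcm] at h1
        exact h1
    show normG s N (((x : ∀ i', G i'))⁻¹ * (y : ∀ i', G i')) ≤ C * r + 0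
    rw [hxy, inv_mul_cancel, normG_one s N hN]
    nlinarith
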